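/- Let F̂(z) = Mz + G(z) be a C¹ lift of a torus map with G of class C¹, satisfying the expanding-block assumption with k = 1 (P∘M = m·P for an integer m with |m| > 1) and admitting an invariant expanding cone structure with constants α > 0 and K > 1 centered on the first coordinate direction. Let Φ̂(z) = lim_{n→∞} m^{−n} P(F̂^n(z)) and define Ĥ: ℝ^d → ℝ × ℝ^{d−1} ≅ ℝ^d by Ĥ(z) = (Φ̂(z), Qz). Then Ĥ is a homeomorphism of ℝ^d, it satisfies Ĥ(z + p) = Ĥ(z) + (p₁, Qp) for all p ∈ ℤ^d, and the conjugated map Ĥ∘F̂∘Ĥ^{−1} has the skew-product form (x, y) ↦ (m·x, g(x,y)) for some continuous g: ℝ × ℝ^{d−1} → ℝ^{d−1}. Hence the induced torus map is topologically conjugate to a skew product over the expanding circle map x ↦ mx mod 1. -/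

import Mathlib

open Filter Topology

noncomputable section

/-- Reinterpret a vector `Fin d → ℝ` as a point of Euclidean space `ℝ^d`. -/
def toEuc (d : ℕ) (v : Fin d → ℝ) : EuclideanSpace ℝ (Fin d) := WithLp.toLp 2 v

/-- The canonical projection `ℝ^n → ℝ^n/ℤ^n` (the `n`-torus), coordinatewise `mod 1`. -/
def torusProj (n : ℕ) (z : EuclideanSpace ℝ (Fin n)) : Fin n → AddCircle (1 : ℝ) :=
  fun i => ((z i : ℝ) : AddCircle (1 : ℝ))

/-- Projection onto the last `d - k` coordinates of `ℝ^d`. -/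
def projQ (d k : ℕ) (h : k ≤ d) (z : EuclideanSpace ℝ (Fin d)) :
    EuclideanSpace ℝ (Fin (d - k)) :=
  WithLp.toLp 2 fun j => z ⟨k + j.val, by have := j.isLt; omega⟩

namespace Stmt15

variable {d : ℕ}

def emb (d : ℕ) (hd : 0 < d) (x : ℝ) (y : EuclideanSpace ℝ (Fin (d-1))) :
    EuclideanSpace ℝ (Fin d) :=
  toEuc d fun i => if h : i.val = 0 then x else y ⟨i.val - 1, by have := i.isLt; omega⟩

lemma emb_zero (hd : 0 < d) (x : ℝ) (y : EuclideanSpace ℝ (Fin (d-1))) :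
    emb d hd x y ⟨0, hd⟩ = x := by simp [emb, toEuc]

lemma projQ_emb (hd : 0 < d) (x : ℝ) (y : EuclideanSpace ℝ (Fin (d-1))) :
    projQ d 1 hd (emb d hd x y) = y := by
  ext j
  show (emb d hd x y) ⟨1 + j.val, _⟩ = y j
  have h : (1 + j.val) ≠ 0 := by omega
  simp only [emb, toEuc, WithLp.ofLp_toLp, dif_neg h]
  refine congrArg y.ofLp ?_
  exact Fin.ext (by simp)

lemma emb_eta (hd : 0 < d) (z : EuclideanSpace ℝ (Fin d)) :
    emb d hd (z ⟨0, hd⟩) (projQ d 1 hd z) = z := by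
  ext i
  by_cases h : i.val = 0
  · have : i = ⟨0, hd⟩ := Fin.ext h
    subst this
    simp [emb, toEuc]
  · simp only [emb, toEuc, WithLp.ofLp_toLp, dif_neg h]
    show z ⟨1 + (i.val - 1), _⟩ = z i
    refine congrArg z.ofLp ?_
    exact Fin.ext (by simp; omega)

lemma continuous_emb (hd : 0 < d) :
    Continuous (fun w : ℝ × EuclideanSpace ℝ (Fin (d-1)) => emb d hd w.1 w.2) := by
  apply (PiLp.continuous_toLp 2 (fun _ : Fin d => ℝ)).comp
  apply continuous_pi
  intro i
  show Continuous (fun w : ℝ × EuclideanSpace ℝ (Fin (d-1)) => emb d hd w.1 w.2 i)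
  by_cases h : i.val = 0
  · have heq : (fun w : ℝ × EuclideanSpace ℝ (Fin (d-1)) => emb d hd w.1 w.2 i)
        = fun w => w.1 := by
      funext w; simp [emb, toEuc, h]
    rw [heq]; exact continuous_fst
  · have hi : i.val - 1 < d - 1 := by have := i.isLt; omega
    have heq : (fun w : ℝ × EuclideanSpace ℝ (Fin (d-1)) => emb d hd w.1 w.2 i)
        = fun w => w.2 ⟨i.val - 1, hi⟩ := by
      funext w; simp [emb, toEuc, h]
    rw [heq]
    exact (EuclideanSpace.proj (⟨i.val - 1, hi⟩ : Fin (d-1))).continuous.comp continuous_snd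

lemma continuous_projQ (hd : 0 < d) : Continuous (projQ d 1 hd) := by
  apply (PiLp.continuous_toLp 2 (fun _ : Fin (d-1) => ℝ)).comp
  exact continuous_pi fun j => (EuclideanSpace.proj (⟨1 + j.val, by omega⟩ : Fin d)).continuous

lemma projQ_add (hd : 0 < d) (z w : EuclideanSpace ℝ (Fin d)) :
    projQ d 1 hd (z + w) = projQ d 1 hd z + projQ d 1 hd w := by
  ext j
  show (z + w) _ = _
  rw [PiLp.add_apply]
  rfl



lemma abs_coord_le_norm {n : ℕ} (z : EuclideanSpace ℝ (Fin n)) (i : Fin n) : |z i| ≤ ‖z‖ := by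
  have h1 : |z i| ^ 2 ≤ ∑ j, |z j| ^ 2 :=
    Finset.single_le_sum (f := fun j => |z j| ^ 2) (fun j _ => sq_nonneg _) (Finset.mem_univ i)
  have h2 : |z i| = Real.sqrt (|z i| ^ 2) := by rw [Real.sqrt_sq_eq_abs, abs_abs]
  rw [EuclideanSpace.norm_eq]
  simp only [Real.norm_eq_abs]
  rw [h2]
  exact Real.sqrt_le_sqrt h1

lemma pos_or_neg {f : ℝ → ℝ} (hf : Continuous f) (h0 : ∀ t, f t ≠ 0) :
    (∀ t, 0 < f t) ∨ (∀ t, f t < 0) := by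
  by_contra h
  push_neg at h
  obtain ⟨⟨a, ha⟩, ⟨b, hb⟩⟩ := h
  have : (0:ℝ) ∈ Set.uIcc (f a) (f b) := Set.mem_uIcc.2 (Or.inl ⟨ha, hb⟩)
  obtain ⟨t, _, ht⟩ := intermediate_value_uIcc hf.continuousOn this
  exact h0 t ht

lemma geom_eq (n : ℕ) : ∀ N, n ≤ N →
    ∑ j ∈ Finset.Ico n N, ((2:ℝ)⁻¹)^(j+1) = (2⁻¹)^n - (2⁻¹)^N := by
  intro N
  induction N with
  | zero => intro h; interval_cases n; simp
  | succ N ihM =>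
    intro hM
    rcases le_or_gt n N with h' | h'
    · rw [Finset.sum_Ico_succ_top h', ihM h', pow_succ]
      ring
    · have : n = N + 1 := by omega
      subst this; simp

lemma geom_tail (n N : ℕ) : ∑ j ∈ Finset.Ico n N, ((2:ℝ)⁻¹)^(j+1) ≤ (2⁻¹)^n := by
  rcases le_or_gt n N with h | h
  · rw [geom_eq n N h]
    have : (0:ℝ) < (2⁻¹:ℝ)^N := by positivity
    linarith
  · rw [Finset.Ico_eq_empty_of_le h.le]
    simp

section Main

variable {d : ℕ} (hd : 0 < d) (M : Matrix (Fin d) (Fin d) ℝ)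
  {G F : EuclideanSpace ℝ (Fin d) → EuclideanSpace ℝ (Fin d)} {m : ℤ}
  {Φ : EuclideanSpace ℝ (Fin d) → ℝ} {C : ℝ}

/-- The integer matrix part as a continuous linear map. -/
def MLmap : EuclideanSpace ℝ (Fin d) →L[ℝ] EuclideanSpace ℝ (Fin d) :=
  LinearMap.toContinuousLinearMap
    { toFun := fun z => toEuc d (M.mulVec z)
      map_add' := by
        intro x y
        ext i
        simp [toEuc, Matrix.mulVec, dotProduct, PiLp.add_apply, mul_add,
          Finset.sum_add_distrib]
      map_smul' := by
        intro c x
        ext i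
        simp [toEuc, Matrix.mulVec, dotProduct, PiLp.smul_apply, smul_eq_mul,
          Finset.mul_sum, mul_left_comm] }

lemma MLmap_apply (z : EuclideanSpace ℝ (Fin d)) : MLmap M z = toEuc d (M.mulVec z) := rfl

lemma F_contDiff (hF : ∀ z, F z = toEuc d (M.mulVec z) + G z) (hGC1 : ContDiff ℝ 1 G) :
    ContDiff ℝ 1 F := by
  have : F = fun z => MLmap M z + G z := funext fun z => hF z
  rw [this]
  exact ((MLmap M).contDiff).add hGC1

lemma PF (hF : ∀ z, F z = toEuc d (M.mulVec z) + G z)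
    (hPM : ∀ z : EuclideanSpace ℝ (Fin d),
      toEuc d (M.mulVec z) ⟨0, hd⟩ = (m : ℝ) * z ⟨0, hd⟩)
    (w : EuclideanSpace ℝ (Fin d)) :
    F w ⟨0, hd⟩ = (m : ℝ) * w ⟨0, hd⟩ + G w ⟨0, hd⟩ := by
  rw [hF w]
  show (toEuc d (M.mulVec w) + G w) ⟨0, hd⟩ = _
  rw [PiLp.add_apply, hPM w]

lemma F_lattice_one (hMint : ∀ i j, ∃ n : ℤ, M i j = (n : ℝ))
    (hGper : ∀ (z : EuclideanSpace ℝ (Fin d)) (p : Fin d → ℤ),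
      G (z + toEuc d fun i => (p i : ℝ)) = G z)
    (hF : ∀ z, F z = toEuc d (M.mulVec z) + G z)
    (w : EuclideanSpace ℝ (Fin d)) (q : Fin d → ℤ) :
    ∃ q' : Fin d → ℤ, F (w + toEuc d fun i => (q i : ℝ))
      = F w + toEuc d fun i => ((q' i : ℤ) : ℝ) := by
  choose N hN using hMint
  refine ⟨fun i => ∑ j, N i j * q j, ?_⟩
  rw [hF, hF, hGper w q]
  have key : toEuc d (M.mulVec (w + toEuc d fun i => (q i : ℝ)))
      = toEuc d (M.mulVec w) + toEuc d fun i => ((∑ j, N i j * q j : ℤ) : ℝ) := by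
    ext i
    show (M.mulVec (w + toEuc d fun i => (q i : ℝ))) i
      = (toEuc d (M.mulVec w) + toEuc d fun i => ((∑ j, N i j * q j : ℤ) : ℝ)) i
    rw [PiLp.add_apply]
    show ∑ j, M i j * ((w + toEuc d fun i => (q i : ℝ)) j)
      = (∑ j, M i j * w j) + ((∑ j, N i j * q j : ℤ) : ℝ)
    have h1 : ∀ j, (w + toEuc d fun i => (q i : ℝ)) j = w j + (q j : ℝ) := fun j => by
      rw [PiLp.add_apply]; rfl
    calc ∑ j, M i j * ((w + toEuc d fun i => (q i : ℝ)) j)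
        = ∑ j, (M i j * w j + M i j * (q j : ℝ)) := by
          refine Finset.sum_congr rfl fun j _ => ?_
          rw [h1 j]; ring
      _ = (∑ j, M i j * w j) + ∑ j, M i j * (q j : ℝ) := Finset.sum_add_distrib
      _ = (∑ j, M i j * w j) + ((∑ j, N i j * q j : ℤ) : ℝ) := by
          congr 1
          push_cast
          refine Finset.sum_congr rfl fun j _ => ?_
          rw [hN i j]
  rw [WithLp.ofLp_add, key]
  abel

lemma iter_lattice (hMint : ∀ i j, ∃ n : ℤ, M i j = (n : ℝ))
    (hGper : ∀ (z : EuclideanSpace ℝ (Fin d)) (p : Fin d → ℤ),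
      G (z + toEuc d fun i => (p i : ℝ)) = G z)
    (hF : ∀ z, F z = toEuc d (M.mulVec z) + G z)
    (n : ℕ) (z : EuclideanSpace ℝ (Fin d)) (p : Fin d → ℤ) :
    ∃ q : Fin d → ℤ, F^[n] (z + toEuc d fun i => (p i : ℝ))
      = F^[n] z + toEuc d fun i => (q i : ℝ) := by
  induction n with
  | zero => exact ⟨p, rfl⟩
  | succ n ih =>
    obtain ⟨q, hq⟩ := ih
    obtain ⟨q', hq'⟩ := F_lattice_one M hMint hGper hF (F^[n] z) q
    refine ⟨q', ?_⟩
    rw [Function.iterate_succ_apply', Function.iterate_succ_apply', hq, hq']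

/-- `Tn n z = m^{-n} * P(F^n z)`. -/
def Tn (hd : 0 < d) (F : EuclideanSpace ℝ (Fin d) → EuclideanSpace ℝ (Fin d)) (m : ℤ)
    (n : ℕ) (z : EuclideanSpace ℝ (Fin d)) : ℝ :=
  ((m : ℝ) ^ n)⁻¹ * (F^[n] z) ⟨0, hd⟩

lemma m_ne_zero (hm : 1 < |m|) : ((m : ℝ)) ≠ 0 := by
  have : (2:ℝ) ≤ |(m:ℝ)| := by exact_mod_cast (by omega : (2:ℤ) ≤ |m|)
  intro h; rw [h] at this; simp at this; linarith

lemma two_le_abs_m (hm : 1 < |m|) : (2:ℝ) ≤ |(m:ℝ)| := by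
  exact_mod_cast (by omega : (2:ℤ) ≤ |m|)

lemma Tn_closed (hF : ∀ z, F z = toEuc d (M.mulVec z) + G z)
    (hPM : ∀ z : EuclideanSpace ℝ (Fin d),
      toEuc d (M.mulVec z) ⟨0, hd⟩ = (m : ℝ) * z ⟨0, hd⟩)
    (hm : 1 < |m|) (n : ℕ) (z : EuclideanSpace ℝ (Fin d)) :
    Tn hd F m n z = z ⟨0, hd⟩
      + ∑ j ∈ Finset.range n, ((m : ℝ) ^ (j+1))⁻¹ * (G (F^[j] z) ⟨0, hd⟩) := by
  induction n with
  | zero => simp [Tn]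
  | succ n ih =>
    have hm0 : ((m:ℝ)) ≠ 0 := m_ne_zero hm
    have step : Tn hd F m (n+1) z
        = Tn hd F m n z + ((m : ℝ) ^ (n+1))⁻¹ * (G (F^[n] z) ⟨0, hd⟩) := by
      unfold Tn
      rw [Function.iterate_succ_apply', PF hd M hF hPM (F^[n] z)]
      field_simp
      ring
    rw [step, ih, Finset.sum_range_succ]
    ring

lemma Tn_tail (hF : ∀ z, F z = toEuc d (M.mulVec z) + G z)
    (hPM : ∀ z : EuclideanSpace ℝ (Fin d),
      toEuc d (M.mulVec z) ⟨0, hd⟩ = (m : ℝ) * z ⟨0, hd⟩)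
    (hm : 1 < |m|) (hGbdd : ∀ z, ‖G z‖ ≤ C)
    (z : EuclideanSpace ℝ (Fin d)) (n N : ℕ) (hn : n ≤ N) :
    |Tn hd F m N z - Tn hd F m n z| ≤ C * (2⁻¹) ^ n := by
  have hC : 0 ≤ C := le_trans (norm_nonneg _) (hGbdd 0)
  have hdiff : Tn hd F m N z - Tn hd F m n z
      = ∑ j ∈ Finset.Ico n N, ((m : ℝ) ^ (j+1))⁻¹ * (G (F^[j] z) ⟨0, hd⟩) := by
    rw [Tn_closed hd M hF hPM hm N z, Tn_closed hd M hF hPM hm n z]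
    have := Finset.sum_Ico_consecutive
      (f := fun j => ((m : ℝ) ^ (j+1))⁻¹ * (G (F^[j] z) ⟨0, hd⟩))
      (Nat.zero_le n) hn
    rw [← Finset.range_eq_Ico, ← Finset.range_eq_Ico] at this
    rw [← this]
    ring
  rw [hdiff]
  calc |∑ j ∈ Finset.Ico n N, ((m : ℝ) ^ (j+1))⁻¹ * (G (F^[j] z) ⟨0, hd⟩)|
      ≤ ∑ j ∈ Finset.Ico n N, |((m : ℝ) ^ (j+1))⁻¹ * (G (F^[j] z) ⟨0, hd⟩)| :=
        Finset.abs_sum_le_sum_abs _ _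
    _ ≤ ∑ j ∈ Finset.Ico n N, C * (2⁻¹) ^ (j+1) := by
        refine Finset.sum_le_sum fun j _ => ?_
        rw [abs_mul]
        have h1 : |((m : ℝ) ^ (j+1))⁻¹| ≤ (2⁻¹ : ℝ) ^ (j+1) := by
          rw [abs_inv, abs_pow, ← inv_pow]
          refine pow_le_pow_left₀ (by positivity) ?_ _
          rw [inv_le_inv₀ (by linarith [two_le_abs_m (m := m) hm]) (by norm_num)]
          exact two_le_abs_m hm
        have h2 : |G (F^[j] z) ⟨0, hd⟩| ≤ C :=
          le_trans (abs_coord_le_norm _ _) (hGbdd _)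
        calc |((m : ℝ) ^ (j+1))⁻¹| * |G (F^[j] z) ⟨0, hd⟩|
            ≤ (2⁻¹ : ℝ) ^ (j+1) * C := by
              apply mul_le_mul h1 h2 (abs_nonneg _) (by positivity)
          _ = C * (2⁻¹) ^ (j+1) := by ring
    _ = C * ∑ j ∈ Finset.Ico n N, (2⁻¹ : ℝ) ^ (j+1) := by rw [Finset.mul_sum]
    _ ≤ C * (2⁻¹) ^ n := by
        exact mul_le_mul_of_nonneg_left (geom_tail n N) hC

lemma Phi_approx (hF : ∀ z, F z = toEuc d (M.mulVec z) + G z)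
    (hPM : ∀ z : EuclideanSpace ℝ (Fin d),
      toEuc d (M.mulVec z) ⟨0, hd⟩ = (m : ℝ) * z ⟨0, hd⟩)
    (hm : 1 < |m|) (hGbdd : ∀ z, ‖G z‖ ≤ C)
    (hΦ : ∀ z, Tendsto (fun n : ℕ => ((m : ℝ) ^ n)⁻¹ * (F^[n] z) ⟨0, hd⟩)
      atTop (𝓝 (Φ z)))
    (z : EuclideanSpace ℝ (Fin d)) (n : ℕ) :
    |Φ z - Tn hd F m n z| ≤ C * (2⁻¹) ^ n := by
  have h1 : Tendsto (fun N => |Tn hd F m N z - Tn hd F m n z|) atTop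
      (𝓝 |Φ z - Tn hd F m n z|) := by
    have := ((hΦ z).sub_const (Tn hd F m n z)).abs
    exact this
  refine le_of_tendsto h1 ?_
  filter_upwards [eventually_ge_atTop n] with N hN
  exact Tn_tail hd M hF hPM hm hGbdd z n N hN

lemma Phi_sub_coord (hF : ∀ z, F z = toEuc d (M.mulVec z) + G z)
    (hPM : ∀ z : EuclideanSpace ℝ (Fin d),
      toEuc d (M.mulVec z) ⟨0, hd⟩ = (m : ℝ) * z ⟨0, hd⟩)
    (hm : 1 < |m|) (hGbdd : ∀ z, ‖G z‖ ≤ C)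
    (hΦ : ∀ z, Tendsto (fun n : ℕ => ((m : ℝ) ^ n)⁻¹ * (F^[n] z) ⟨0, hd⟩)
      atTop (𝓝 (Φ z)))
    (z : EuclideanSpace ℝ (Fin d)) :
    |Φ z - z ⟨0, hd⟩| ≤ C := by
  have := Phi_approx hd M hF hPM hm hGbdd hΦ z 0
  simpa [Tn] using this

lemma Phi_continuous (hF : ∀ z, F z = toEuc d (M.mulVec z) + G z) (hGC1 : ContDiff ℝ 1 G)
    (hPM : ∀ z : EuclideanSpace ℝ (Fin d),
      toEuc d (M.mulVec z) ⟨0, hd⟩ = (m : ℝ) * z ⟨0, hd⟩)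
    (hm : 1 < |m|) (hGbdd : ∀ z, ‖G z‖ ≤ C)
    (hΦ : ∀ z, Tendsto (fun n : ℕ => ((m : ℝ) ^ n)⁻¹ * (F^[n] z) ⟨0, hd⟩)
      atTop (𝓝 (Φ z))) :
    Continuous Φ := by
  have hFc : Continuous F := (F_contDiff M hF hGC1).continuous
  have hTn : ∀ n, Continuous (fun z => Tn hd F m n z) := by
    intro n
    exact continuous_const.mul
      ((EuclideanSpace.proj (⟨0, hd⟩ : Fin d)).continuous.comp (hFc.iterate n))
  have hunif : TendstoUniformly (fun n z => Tn hd F m n z) Φ atTop := by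
    rw [Metric.tendstoUniformly_iff]
    intro ε hε
    have h0 : Tendsto (fun n : ℕ => C * (2⁻¹ : ℝ) ^ n) atTop (𝓝 0) := by
      simpa using (tendsto_pow_atTop_nhds_zero_of_lt_one
        (by norm_num : (0:ℝ) ≤ 2⁻¹) (by norm_num : (2⁻¹:ℝ) < 1)).const_mul C
    filter_upwards [h0.eventually (gt_mem_nhds hε)] with n hn z
    rw [Real.dist_eq]
    exact lt_of_le_of_lt (Phi_approx hd M hF hPM hm hGbdd hΦ z n) hn
  exact hunif.continuous (Frequently.of_forall hTn)

lemma Phi_F (hm : 1 < |m|)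
    (hΦ : ∀ z, Tendsto (fun n : ℕ => ((m : ℝ) ^ n)⁻¹ * (F^[n] z) ⟨0, hd⟩)
      atTop (𝓝 (Φ z)))
    (z : EuclideanSpace ℝ (Fin d)) : Φ (F z) = (m : ℝ) * Φ z := by
  have hm0 : ((m:ℝ)) ≠ 0 := m_ne_zero hm
  have h1 : Tendsto (fun n : ℕ => Tn hd F m n (F z)) atTop (𝓝 (Φ (F z))) := hΦ (F z)
  have h2 : Tendsto (fun n : ℕ => Tn hd F m n (F z)) atTop (𝓝 ((m : ℝ) * Φ z)) := by
    have heq : ∀ n : ℕ, Tn hd F m n (F z) = (m : ℝ) * Tn hd F m (n+1) z := by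
      intro n
      unfold Tn
      rw [← Function.iterate_succ_apply]
      rw [pow_succ]
      field_simp
    simp only [heq]
    exact (((hΦ z).comp (tendsto_add_atTop_nat 1)).const_mul _)
  exact tendsto_nhds_unique h1 h2

lemma Phi_Fn (hm : 1 < |m|)
    (hΦ : ∀ z, Tendsto (fun n : ℕ => ((m : ℝ) ^ n)⁻¹ * (F^[n] z) ⟨0, hd⟩)
      atTop (𝓝 (Φ z)))
    (n : ℕ) (z : EuclideanSpace ℝ (Fin d)) : Φ (F^[n] z) = (m : ℝ) ^ n * Φ z := by
  induction n with
  | zero => simp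
  | succ n ih =>
    rw [Function.iterate_succ_apply', Phi_F hd hm hΦ, ih, pow_succ]
    ring

lemma Phi_per (hMint : ∀ i j, ∃ n : ℤ, M i j = (n : ℝ))
    (hGper : ∀ (z : EuclideanSpace ℝ (Fin d)) (p : Fin d → ℤ),
      G (z + toEuc d fun i => (p i : ℝ)) = G z)
    (hF : ∀ z, F z = toEuc d (M.mulVec z) + G z)
    (hPM : ∀ z : EuclideanSpace ℝ (Fin d),
      toEuc d (M.mulVec z) ⟨0, hd⟩ = (m : ℝ) * z ⟨0, hd⟩)
    (hm : 1 < |m|)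
    (hΦ : ∀ z, Tendsto (fun n : ℕ => ((m : ℝ) ^ n)⁻¹ * (F^[n] z) ⟨0, hd⟩)
      atTop (𝓝 (Φ z)))
    (z : EuclideanSpace ℝ (Fin d)) (p : Fin d → ℤ) :
    Φ (z + toEuc d fun i => (p i : ℝ)) = Φ z + (p ⟨0, hd⟩ : ℝ) := by
  have key : ∀ n, Tn hd F m n (z + toEuc d fun i => (p i : ℝ))
      = Tn hd F m n z + (p ⟨0, hd⟩ : ℝ) := by
    intro n
    rw [Tn_closed hd M hF hPM hm, Tn_closed hd M hF hPM hm]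
    have hcoord : (z + toEuc d fun i => (p i : ℝ)) ⟨0, hd⟩
        = z ⟨0, hd⟩ + (p ⟨0, hd⟩ : ℝ) := by
      rw [PiLp.add_apply]; rfl
    have hsum : ∀ j ∈ Finset.range n,
        ((m : ℝ) ^ (j+1))⁻¹ * (G (F^[j] (z + toEuc d fun i => (p i : ℝ))) ⟨0, hd⟩)
        = ((m : ℝ) ^ (j+1))⁻¹ * (G (F^[j] z) ⟨0, hd⟩) := by
      intro j _
      obtain ⟨q, hq⟩ := iter_lattice M hMint hGper hF j z p
      rw [hq, hGper]
    rw [hcoord, Finset.sum_congr rfl hsum]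
    ring
  have h1 : Tendsto (fun n : ℕ => Tn hd F m n (z + toEuc d fun i => (p i : ℝ))) atTop
      (𝓝 (Φ (z + toEuc d fun i => (p i : ℝ)))) := hΦ _
  have h2 : Tendsto (fun n : ℕ => Tn hd F m n (z + toEuc d fun i => (p i : ℝ))) atTop
      (𝓝 (Φ z + (p ⟨0, hd⟩ : ℝ))) := by
    simp only [key]
    exact (hΦ z).add_const _
  exact tendsto_nhds_unique h1 h2

lemma expand {α K : ℝ} (hF : ∀ z, F z = toEuc d (M.mulVec z) + G z) (hGC1 : ContDiff ℝ 1 G)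
    (hα : 0 < α) (hK : 1 < K)
    (hcone : ∀ (z v : EuclideanSpace ℝ (Fin d)),
      ‖projQ d 1 hd v‖ ≤ α * |v ⟨0, hd⟩| →
        ‖projQ d 1 hd (fderiv ℝ F z v)‖ ≤ α * |(fderiv ℝ F z v) ⟨0, hd⟩| ∧
        K * |v ⟨0, hd⟩| ≤ |(fderiv ℝ F z v) ⟨0, hd⟩|)
    (y : EuclideanSpace ℝ (Fin (d-1))) (a b : ℝ) (hab : a < b) (n : ℕ) :
    K ^ n * (b - a) ≤
      |(F^[n] (emb d hd b y)) ⟨0, hd⟩ - (F^[n] (emb d hd a y)) ⟨0, hd⟩| := by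
  have hFC1 : ContDiff ℝ 1 F := F_contDiff M hF hGC1
  have hFdiff : Differentiable ℝ F := hFC1.differentiable one_ne_zero
  have hfd_cont : Continuous (fun z => fderiv ℝ F z) := hFC1.continuous_fderiv one_ne_zero
  have hFc : Continuous F := hFC1.continuous
  set v : EuclideanSpace ℝ (Fin d) := EuclideanSpace.single ⟨0, hd⟩ (b - a) with hv
  set z0 : EuclideanSpace ℝ (Fin d) := emb d hd a y with hz0
  set γ : ℝ → EuclideanSpace ℝ (Fin d) := fun t => z0 + t • v with hγ
  have γcont : Continuous γ := continuous_const.add (continuous_id.smul continuous_const)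
  have hγ0 : γ 0 = emb d hd a y := by simp [hγ, hz0]
  have hγ1 : γ 1 = emb d hd b y := by
    rw [hγ]
    show z0 + (1:ℝ) • v = emb d hd b y
    rw [one_smul]
    ext i
    rw [PiLp.add_apply]
    by_cases h : i = (⟨0, hd⟩ : Fin d)
    · subst h
      rw [hz0, emb_zero]
      show a + (EuclideanSpace.single (⟨0, hd⟩ : Fin d) (b - a)) ⟨0, hd⟩ = emb d hd b y ⟨0, hd⟩
      rw [EuclideanSpace.single_apply, if_pos rfl, emb_zero]
      ring
    · show z0 i + (EuclideanSpace.single (⟨0, hd⟩ : Fin d) (b - a)) i = emb d hd b y i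
      rw [EuclideanSpace.single_apply, if_neg h, add_zero, hz0]
      have hi : i.val ≠ 0 := fun hh => h (Fin.ext hh)
      simp [emb, toEuc, dif_neg hi]
  have hγder : ∀ t, HasDerivAt γ v t := by
    intro t
    have h := ((hasDerivAt_id t).smul_const v).const_add z0
    simpa [hγ] using h
  have hQv : projQ d 1 hd v = 0 := by
    ext j
    show v ⟨1 + j.val, _⟩ = 0
    rw [hv, EuclideanSpace.single_apply, if_neg]
    intro h
    have := congrArg Fin.val h
    simp at this
  have hPv : v ⟨0, hd⟩ = b - a := by
    rw [hv, EuclideanSpace.single_apply, if_pos rfl]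
  have main : ∀ n : ℕ, ∃ w : ℝ → EuclideanSpace ℝ (Fin d),
      Continuous w ∧ (∀ t, HasDerivAt (fun s => F^[n] (γ s)) (w t) t) ∧
      (∀ t, ‖projQ d 1 hd (w t)‖ ≤ α * |(w t) ⟨0, hd⟩|) ∧
      (∀ t, K ^ n * (b - a) ≤ |(w t) ⟨0, hd⟩|) := by
    intro n
    induction n with
    | zero =>
      refine ⟨fun _ => v, continuous_const, ?_, ?_, ?_⟩
      · intro t
        simpa using hγder t
      · intro t
        show _ ≤ α * |v ⟨0, hd⟩|
        rw [hQv, hPv, norm_zero]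
        exact mul_nonneg hα.le (abs_nonneg _)
      · intro t
        show K ^ 0 * (b - a) ≤ |v ⟨0, hd⟩|
        rw [hPv, pow_zero, one_mul]
        exact le_abs_self _
    | succ n ih =>
      obtain ⟨w, wcont, wder, wcone, wbound⟩ := ih
      refine ⟨fun t => fderiv ℝ F (F^[n] (γ t)) (w t), ?_, ?_, ?_, ?_⟩
      · exact (isBoundedBilinearMap_apply.continuous).comp
          ((hfd_cont.comp ((hFc.iterate n).comp γcont)).prodMk wcont)
      · intro t
        have h := ((hFdiff (F^[n] (γ t))).hasFDerivAt).comp_hasDerivAt t (wder t)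
        have heq : (fun s => F^[n+1] (γ s)) = (F ∘ fun s => F^[n] (γ s)) :=
          funext fun s => Function.iterate_succ_apply' F n (γ s)
        rw [heq]
        exact h
      · intro t
        exact (hcone (F^[n] (γ t)) (w t) (wcone t)).1
      · intro t
        have h1 := (hcone (F^[n] (γ t)) (w t) (wcone t)).2
        have h2 : K ^ (n+1) * (b - a) = K * (K ^ n * (b - a)) := by ring
        rw [h2]
        exact le_trans (mul_le_mul_of_nonneg_left (wbound t) (by linarith)) h1
  obtain ⟨w, wcont, wder, _, wbound⟩ := main n
  set f : ℝ → ℝ := fun t => (F^[n] (γ t)) ⟨0, hd⟩ with hf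
  set s : ℝ → ℝ := fun t => (w t) ⟨0, hd⟩ with hs
  have fder : ∀ t, HasDerivAt f (s t) t := by
    intro t
    exact ((EuclideanSpace.proj (⟨0, hd⟩ : Fin d)).hasFDerivAt).comp_hasDerivAt t (wder t)
  have scont : Continuous s :=
    (EuclideanSpace.proj (⟨0, hd⟩ : Fin d)).continuous.comp wcont
  have hKn : 0 < K ^ n * (b - a) := by
    have : (0:ℝ) < K := by linarith
    have := pow_pos this n
    nlinarith
  have hne : ∀ t, s t ≠ 0 := by
    intro t h
    have hb := wbound t
    rw [show |w t ⟨0, hd⟩| = |s t| from rfl, h, abs_zero] at hb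
    linarith
  have fcont : Continuous f :=
    (EuclideanSpace.proj (⟨0, hd⟩ : Fin d)).continuous.comp ((hFc.iterate n).comp γcont)
  have goal01 : K ^ n * (b - a) ≤ |f 1 - f 0| := by
    rcases pos_or_neg scont hne with hpos | hneg
    · have key := convex_univ.mul_sub_le_image_sub_of_le_deriv (f := f)
        (C := K ^ n * (b - a))
        fcont.continuousOn
        (fun x _ => (fder x).differentiableAt.differentiableWithinAt)
        (fun x _ => by
          rw [(fder x).deriv]
          have hbx := wbound x
          rw [show |w x ⟨0, hd⟩| = |s x| from rfl, abs_of_pos (hpos x)] at hbx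
          exact hbx)
        0 (Set.mem_univ _) 1 (Set.mem_univ _) zero_le_one
      have : K ^ n * (b - a) ≤ f 1 - f 0 := by linarith
      exact this.trans (le_abs_self _)
    · have key := convex_univ.mul_sub_le_image_sub_of_le_deriv (f := fun t => -f t)
        (C := K ^ n * (b - a))
        fcont.neg.continuousOn
        (fun x _ => (fder x).neg.differentiableAt.differentiableWithinAt)
        (fun x _ => by
          rw [(fder x).fun_neg.deriv]
          have hbx := wbound x
          rw [show |w x ⟨0, hd⟩| = |s x| from rfl, abs_of_neg (hneg x)] at hbx
          exact hbx)
        0 (Set.mem_univ _) 1 (Set.mem_univ _) zero_le_one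
      have key' : K ^ n * (b - a) * (1 - 0) ≤ -f 1 - -f 0 := key
      have h1 : K ^ n * (b - a) ≤ f 0 - f 1 := by linarith
      calc K ^ n * (b - a) ≤ f 0 - f 1 := h1
        _ ≤ |f 0 - f 1| := le_abs_self _
        _ = |f 1 - f 0| := abs_sub_comm _ _
  rw [hf] at goal01
  simp only [hγ0, hγ1] at goal01
  exact goal01

variable {α K : ℝ}

lemma Phi_inj (hMint : ∀ i j, ∃ n : ℤ, M i j = (n : ℝ))
    (hGper : ∀ (z : EuclideanSpace ℝ (Fin d)) (p : Fin d → ℤ),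
      G (z + toEuc d fun i => (p i : ℝ)) = G z)
    (hF : ∀ z, F z = toEuc d (M.mulVec z) + G z) (hGC1 : ContDiff ℝ 1 G)
    (hPM : ∀ z : EuclideanSpace ℝ (Fin d),
      toEuc d (M.mulVec z) ⟨0, hd⟩ = (m : ℝ) * z ⟨0, hd⟩)
    (hm : 1 < |m|) (hGbdd : ∀ z, ‖G z‖ ≤ C)
    (hα : 0 < α) (hK : 1 < K)
    (hcone : ∀ (z v : EuclideanSpace ℝ (Fin d)),
      ‖projQ d 1 hd v‖ ≤ α * |v ⟨0, hd⟩| →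
        ‖projQ d 1 hd (fderiv ℝ F z v)‖ ≤ α * |(fderiv ℝ F z v) ⟨0, hd⟩| ∧
        K * |v ⟨0, hd⟩| ≤ |(fderiv ℝ F z v) ⟨0, hd⟩|)
    (hΦ : ∀ z, Tendsto (fun n : ℕ => ((m : ℝ) ^ n)⁻¹ * (F^[n] z) ⟨0, hd⟩)
      atTop (𝓝 (Φ z)))
    (z z' : EuclideanSpace ℝ (Fin d))
    (hQ : projQ d 1 hd z = projQ d 1 hd z') (hphi : Φ z = Φ z') : z = z' := by
  have hC : 0 ≤ C := le_trans (norm_nonneg _) (hGbdd 0)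
  have aux : ∀ a b : ℝ, ∀ y : EuclideanSpace ℝ (Fin (d-1)), a < b →
      Φ (emb d hd a y) ≠ Φ (emb d hd b y) := by
    intro a b y hab heq
    have key : ∀ n : ℕ, K ^ n * (b - a) ≤ 2 * C := by
      intro n
      have h1 := expand hd M hF hGC1 hα hK hcone y a b hab n
      have h2 : ∀ w : EuclideanSpace ℝ (Fin d), |Φ w - w ⟨0, hd⟩| ≤ C :=
        Phi_sub_coord hd M hF hPM hm hGbdd hΦ
      have h3 : Φ (F^[n] (emb d hd b y)) = (m:ℝ)^n * Φ (emb d hd b y) := Phi_Fn hd hm hΦ n _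
      have h4 : Φ (F^[n] (emb d hd a y)) = (m:ℝ)^n * Φ (emb d hd a y) := Phi_Fn hd hm hΦ n _
      have h5 := h2 (F^[n] (emb d hd b y))
      have h6 := h2 (F^[n] (emb d hd a y))
      have h7 : Φ (F^[n] (emb d hd b y)) = Φ (F^[n] (emb d hd a y)) := by
        rw [h3, h4, heq]
      have h8 : |(F^[n] (emb d hd b y)) ⟨0, hd⟩ - (F^[n] (emb d hd a y)) ⟨0, hd⟩| ≤ 2 * C := by
        have := abs_sub_abs_le_abs_sub ((F^[n] (emb d hd b y)) ⟨0, hd⟩) ((F^[n] (emb d hd a y)) ⟨0, hd⟩)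
        calc |(F^[n] (emb d hd b y)) ⟨0, hd⟩ - (F^[n] (emb d hd a y)) ⟨0, hd⟩|
            = |((F^[n] (emb d hd b y)) ⟨0, hd⟩ - Φ (F^[n] (emb d hd b y)))
              - ((F^[n] (emb d hd a y)) ⟨0, hd⟩ - Φ (F^[n] (emb d hd a y)))| := by
              rw [h7]; ring_nf
          _ ≤ |(F^[n] (emb d hd b y)) ⟨0, hd⟩ - Φ (F^[n] (emb d hd b y))|
              + |(F^[n] (emb d hd a y)) ⟨0, hd⟩ - Φ (F^[n] (emb d hd a y))| := abs_sub _ _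
          _ ≤ C + C := by
              have hx := h5; have hy := h6
              rw [abs_sub_comm] at hx hy
              exact add_le_add hx hy
          _ = 2 * C := by ring
      linarith
    have hgrow := tendsto_pow_atTop_atTop_of_one_lt hK
    obtain ⟨n, hn⟩ := (hgrow.eventually_ge_atTop ((2*C + 1)/(b - a))).exists
    have hba : 0 < b - a := by linarith
    have : 2*C + 1 ≤ K ^ n * (b - a) := by
      rw [div_le_iff₀ hba] at hn
      linarith
    linarith [key n]
  have e1 : emb d hd (z' ⟨0, hd⟩) (projQ d 1 hd z) = z' := by
    rw [hQ]; exact emb_eta hd z'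
  have e2 : emb d hd (z ⟨0, hd⟩) (projQ d 1 hd z) = z := emb_eta hd z
  have ha : z ⟨0, hd⟩ = z' ⟨0, hd⟩ := by
    by_contra hne
    rcases lt_or_gt_of_ne hne with h | h
    · exact aux _ _ (projQ d 1 hd z) h (by rw [e1, e2]; exact hphi)
    · exact aux _ _ (projQ d 1 hd z) h (by rw [e1, e2]; exact hphi.symm)
  calc z = emb d hd (z ⟨0, hd⟩) (projQ d 1 hd z) := (emb_eta hd z).symm
    _ = emb d hd (z' ⟨0, hd⟩) (projQ d 1 hd z') := by rw [ha, hQ]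
    _ = z' := emb_eta hd z'

section Fiber

variable (hMint : ∀ i j, ∃ n : ℤ, M i j = (n : ℝ))
    (hGper : ∀ (z : EuclideanSpace ℝ (Fin d)) (p : Fin d → ℤ),
      G (z + toEuc d fun i => (p i : ℝ)) = G z)
    (hF : ∀ z, F z = toEuc d (M.mulVec z) + G z) (hGC1 : ContDiff ℝ 1 G)
    (hPM : ∀ z : EuclideanSpace ℝ (Fin d),
      toEuc d (M.mulVec z) ⟨0, hd⟩ = (m : ℝ) * z ⟨0, hd⟩)
    (hm : 1 < |m|) (hGbdd : ∀ z, ‖G z‖ ≤ C)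
    (hα : 0 < α) (hK : 1 < K)
    (hcone : ∀ (z v : EuclideanSpace ℝ (Fin d)),
      ‖projQ d 1 hd v‖ ≤ α * |v ⟨0, hd⟩| →
        ‖projQ d 1 hd (fderiv ℝ F z v)‖ ≤ α * |(fderiv ℝ F z v) ⟨0, hd⟩| ∧
        K * |v ⟨0, hd⟩| ≤ |(fderiv ℝ F z v) ⟨0, hd⟩|)
    (hΦ : ∀ z, Tendsto (fun n : ℕ => ((m : ℝ) ^ n)⁻¹ * (F^[n] z) ⟨0, hd⟩)
      atTop (𝓝 (Φ z)))

include hMint hGper hF hGC1 hPM hm hGbdd hα hK hcone hΦ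

lemma fiber_cont (y : EuclideanSpace ℝ (Fin (d-1))) :
    Continuous (fun x : ℝ => Φ (emb d hd x y)) := by
  exact (Phi_continuous hd M hF hGC1 hPM hm hGbdd hΦ).comp
    ((continuous_emb hd).comp (continuous_id.prodMk continuous_const))

lemma fiber_bound (y : EuclideanSpace ℝ (Fin (d-1))) (x : ℝ) :
    |Φ (emb d hd x y) - x| ≤ C := by
  have := Phi_sub_coord hd M hF hPM hm hGbdd hΦ (emb d hd x y)
  rwa [emb_zero hd x y] at this

lemma fiber_strictMono (y : EuclideanSpace ℝ (Fin (d-1))) :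
    StrictMono (fun x : ℝ => Φ (emb d hd x y)) := by
  have hC : 0 ≤ C := le_trans (norm_nonneg _) (hGbdd 0)
  have hcont := fiber_cont hd M hMint hGper hF hGC1 hPM hm hGbdd hα hK hcone hΦ y
  have hinj : Function.Injective (fun x : ℝ => Φ (emb d hd x y)) := by
    intro x x' h
    have := Phi_inj hd M hMint hGper hF hGC1 hPM hm hGbdd hα hK hcone hΦ
      (emb d hd x y) (emb d hd x' y)
      (by rw [projQ_emb, projQ_emb]) h
    have := congrArg (fun w : EuclideanSpace ℝ (Fin d) => w ⟨0, hd⟩) this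
    simpa [emb_zero] using this
  rcases Continuous.strictMono_of_inj hcont hinj with h | h
  · exact h
  · exfalso
    set f := fun x : ℝ => Φ (emb d hd x y) with hfdef
    have ht : (0:ℝ) < |f 0| + C + 1 := by positivity
    have h1 : f (|f 0| + C + 1) < f 0 := h ht
    have h2 := fiber_bound hd M hMint hGper hF hGC1 hPM hm hGbdd hα hK hcone hΦ
      y (|f 0| + C + 1)
    have h3 : f 0 ≤ |f 0| := le_abs_self _
    rw [abs_le] at h2
    have h2' : -C ≤ f (|f 0| + C + 1) - (|f 0| + C + 1) := h2.1
    linarith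

lemma fiber_surj (y : EuclideanSpace ℝ (Fin (d-1))) (x : ℝ) :
    ∃ t : ℝ, Φ (emb d hd t y) = x := by
  have hcont := fiber_cont hd M hMint hGper hF hGC1 hPM hm hGbdd hα hK hcone hΦ y
  have hb1 := fiber_bound hd M hMint hGper hF hGC1 hPM hm hGbdd hα hK hcone hΦ y (x - C)
  have hb2 := fiber_bound hd M hMint hGper hF hGC1 hPM hm hGbdd hα hK hcone hΦ y (x + C)
  rw [abs_le] at hb1 hb2
  have hx : x ∈ Set.Icc (Φ (emb d hd (x - C) y)) (Φ (emb d hd (x + C) y)) :=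
    ⟨by linarith [hb1.2], by linarith [hb2.1]⟩
  obtain ⟨t, ht⟩ := intermediate_value_univ (x - C) (x + C) hcont hx
  exact ⟨t, ht⟩

lemma exists_H :
    ∃ H : EuclideanSpace ℝ (Fin d) ≃ₜ (ℝ × EuclideanSpace ℝ (Fin (d - 1))),
      ∀ z, H z = (Φ z, projQ d 1 hd z) := by
  have hΦcont := Phi_continuous hd M hF hGC1 hPM hm hGbdd hΦ
  have hbij : Function.Bijective
      (fun z : EuclideanSpace ℝ (Fin d) => (Φ z, projQ d 1 hd z)) := by
    constructor
    · intro z z' h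
      exact Phi_inj hd M hMint hGper hF hGC1 hPM hm hGbdd hα hK hcone hΦ z z'
        (congrArg Prod.snd h) (congrArg Prod.fst h)
    · intro w
      obtain ⟨t, ht⟩ := fiber_surj hd M hMint hGper hF hGC1 hPM hm hGbdd hα hK hcone hΦ
        w.2 w.1
      refine ⟨emb d hd t w.2, ?_⟩
      have := projQ_emb hd t w.2
      exact Prod.ext ht this
  set Heq := Equiv.ofBijective _ hbij with hHeq
  have htoFun : ∀ z, Heq z = (Φ z, projQ d 1 hd z) := fun z => rfl
  have happly : ∀ w, Heq (Heq.symm w) = w := fun w => Heq.apply_symm_apply w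
  have hsymm_snd : ∀ w, projQ d 1 hd (Heq.symm w) = w.2 := by
    intro w
    have := congrArg Prod.snd (happly w)
    exact this
  have hsymm_fst : ∀ w, Φ (Heq.symm w) = w.1 := by
    intro w
    have := congrArg Prod.fst (happly w)
    exact this
  set ψ := fun w : ℝ × EuclideanSpace ℝ (Fin (d - 1)) => (Heq.symm w) ⟨0, hd⟩ with hψ
  have hsymm_eq : ∀ w, Heq.symm w = emb d hd (ψ w) w.2 := by
    intro w
    conv_lhs => rw [← emb_eta hd (Heq.symm w)]
    rw [hsymm_snd w]
  have hψΦ : ∀ w, Φ (emb d hd (ψ w) w.2) = w.1 := by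
    intro w
    rw [← hsymm_eq w]
    exact hsymm_fst w
  have hψcont : Continuous ψ := by
    rw [continuous_iff_continuousAt]
    intro w₀
    unfold ContinuousAt
    rw [Metric.tendsto_nhds]
    intro ε hε
    set t₀ := ψ w₀ with ht₀
    have hsm := fiber_strictMono hd M hMint hGper hF hGC1 hPM hm hGbdd hα hK hcone hΦ
    have hlt1 : Φ (emb d hd (t₀ - ε/2) w₀.2) < w₀.1 := by
      rw [← hψΦ w₀]
      exact hsm w₀.2 (by linarith)
    have hlt2 : w₀.1 < Φ (emb d hd (t₀ + ε/2) w₀.2) := by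
      rw [← hψΦ w₀]
      exact hsm w₀.2 (by linarith)
    have c1 : Continuous fun w : ℝ × EuclideanSpace ℝ (Fin (d - 1)) =>
        Φ (emb d hd (t₀ - ε/2) w.2) :=
      hΦcont.comp ((continuous_emb hd).comp (continuous_const.prodMk continuous_snd))
    have c2 : Continuous fun w : ℝ × EuclideanSpace ℝ (Fin (d - 1)) =>
        Φ (emb d hd (t₀ + ε/2) w.2) :=
      hΦcont.comp ((continuous_emb hd).comp (continuous_const.prodMk continuous_snd))
    have hUopen : IsOpen {w : ℝ × EuclideanSpace ℝ (Fin (d - 1)) |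
        Φ (emb d hd (t₀ - ε/2) w.2) < w.1 ∧ w.1 < Φ (emb d hd (t₀ + ε/2) w.2)} :=
      (isOpen_lt c1 continuous_fst).inter (isOpen_lt continuous_fst c2)
    filter_upwards [hUopen.mem_nhds ⟨hlt1, hlt2⟩] with w hw
    have k1 : t₀ - ε/2 < ψ w := by
      have := hw.1
      rw [← hψΦ w] at this
      exact (hsm w.2).lt_iff_lt.mp this
    have k2 : ψ w < t₀ + ε/2 := by
      have := hw.2
      rw [← hψΦ w] at this
      exact (hsm w.2).lt_iff_lt.mp this
    rw [Real.dist_eq, abs_lt]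
    constructor <;> [linarith; linarith]
  have hsymm_cont : Continuous (Heq.symm : ℝ × EuclideanSpace ℝ (Fin (d - 1)) →
      EuclideanSpace ℝ (Fin d)) := by
    have : (Heq.symm : ℝ × EuclideanSpace ℝ (Fin (d - 1)) → EuclideanSpace ℝ (Fin d))
        = fun w => emb d hd (ψ w) w.2 := funext hsymm_eq
    rw [this]
    exact (continuous_emb hd).comp (hψcont.prodMk continuous_snd)
  exact ⟨⟨Heq, hΦcont.prodMk (continuous_projQ hd), hsymm_cont⟩, htoFun⟩

end Fiber

end Main

section Torus

lemma circle_coe_int (k : ℤ) : ((k : ℝ) : AddCircle (1:ℝ)) = 0 := by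
  rw [AddCircle.coe_eq_zero_iff]
  exact ⟨k, by simp⟩

lemma circle_coe_add_int (x : ℝ) (k : ℤ) : ((x + (k:ℝ) : ℝ) : AddCircle (1:ℝ)) = (x : AddCircle (1:ℝ)) := by
  rw [AddCircle.coe_add, circle_coe_int, add_zero]

lemma circle_surj (θ : AddCircle (1:ℝ)) : ∃ x : ℝ, (x : AddCircle (1:ℝ)) = θ :=
  QuotientAddGroup.mk_surjective θ

lemma circle_eq_iff {x y : ℝ} (h : (x : AddCircle (1:ℝ)) = (y : AddCircle (1:ℝ))) :
    ∃ k : ℤ, y = x + (k : ℝ) := by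
  have h2 := QuotientAddGroup.eq_iff_sub_mem.mp h.symm
  obtain ⟨k, hk⟩ := AddSubgroup.mem_zmultiples_iff.mp h2
  refine ⟨k, ?_⟩
  have : (k : ℝ) = y - x := by
    rw [← hk]; simp
  linarith [this]

lemma circle_zsmul (k : ℤ) (x : ℝ) :
    (((k : ℝ) * x : ℝ) : AddCircle (1:ℝ)) = k • ((x : ℝ) : AddCircle (1:ℝ)) := by
  have h1 : ((k : ℝ) * x : ℝ) = k • x := by rw [zsmul_eq_mul]
  rw [h1]
  have := map_zsmul (QuotientAddGroup.mk' (AddSubgroup.zmultiples (1:ℝ))) k x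
  simpa [QuotientAddGroup.mk'_apply] using this

lemma circle_coe_cont : Continuous (fun x : ℝ => (x : AddCircle (1:ℝ))) :=
  QuotientAddGroup.isOpenQuotientMap_mk.continuous

lemma tp_cont (n : ℕ) : Continuous (torusProj n) :=
  continuous_pi fun i => circle_coe_cont.comp (EuclideanSpace.proj i).continuous

lemma tp_surj (n : ℕ) (θ : Fin n → AddCircle (1:ℝ)) :
    ∃ z : EuclideanSpace ℝ (Fin n), torusProj n z = θ := by
  refine ⟨toEuc n fun i => Classical.choose (circle_surj (θ i)), ?_⟩
  funext i
  exact Classical.choose_spec (circle_surj (θ i))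

lemma tp_add_int (n : ℕ) (z : EuclideanSpace ℝ (Fin n)) (p : Fin n → ℤ) :
    torusProj n (z + toEuc n fun i => (p i : ℝ)) = torusProj n z := by
  funext i
  show (((z + toEuc n fun i => (p i : ℝ)) i : ℝ) : AddCircle (1:ℝ)) = _
  rw [PiLp.add_apply]
  exact circle_coe_add_int (z i) (p i)

lemma tp_eq_iff {n : ℕ} {z z' : EuclideanSpace ℝ (Fin n)}
    (h : torusProj n z = torusProj n z') :
    ∃ p : Fin n → ℤ, z' = z + toEuc n fun i => (p i : ℝ) := by
  have hco : ∀ i, ∃ k : ℤ, z' i = z i + (k : ℝ) := by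
    intro i
    exact circle_eq_iff (congrFun h i)
  choose p hp using hco
  refine ⟨p, ?_⟩
  ext i
  rw [PiLp.add_apply]
  exact hp i

lemma tp_isQuotientMap (n : ℕ) : IsQuotientMap (torusProj n) := by
  have h1 : IsOpenQuotientMap (Pi.map fun (i : Fin n) (x : ℝ) => ((x : AddCircle (1:ℝ)))) :=
    IsOpenQuotientMap.piMap fun i => QuotientAddGroup.isOpenQuotientMap_mk
  have hhom : IsOpenQuotientMap
      (WithLp.equiv 2 (Fin n → ℝ) : EuclideanSpace ℝ (Fin n) → (Fin n → ℝ)) := by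
    refine ⟨(WithLp.equiv 2 (Fin n → ℝ)).surjective, PiLp.continuous_ofLp _ _, ?_⟩
    have : IsOpenMap ((WithLp.equiv 2 (Fin n → ℝ)).symm ∘ (WithLp.equiv 2 (Fin n → ℝ)) :
        EuclideanSpace ℝ (Fin n) → EuclideanSpace ℝ (Fin n)) → True := fun _ => trivial
    intro U hU
    have : (WithLp.equiv 2 (Fin n → ℝ)) '' U
        = (WithLp.equiv 2 (Fin n → ℝ)).symm ⁻¹' U := by
      ext x
      constructor
      · rintro ⟨y, hy, rfl⟩; exact hy
      · intro h; exact ⟨_, h, rfl⟩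
    rw [this]
    exact (PiLp.continuous_toLp 2 (fun _ : Fin n => ℝ)).isOpen_preimage U hU
  have : torusProj n = (Pi.map fun (i : Fin n) (x : ℝ) => ((x : AddCircle (1:ℝ))))
      ∘ (WithLp.equiv 2 (Fin n → ℝ)) := rfl
  rw [this]
  exact (h1.comp hhom).isQuotientMap

end Torus

section Torus2

variable {d : ℕ}

def pbar (d : ℕ) : (ℝ × EuclideanSpace ℝ (Fin (d-1))) →
    AddCircle (1:ℝ) × (Fin (d-1) → AddCircle (1:ℝ)) :=
  fun w => ((w.1 : AddCircle (1:ℝ)), torusProj (d-1) w.2)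

def liftTor (n : ℕ) (θ : Fin n → AddCircle (1:ℝ)) : EuclideanSpace ℝ (Fin n) :=
  toEuc n fun i => Classical.choose (circle_surj (θ i))

lemma liftTor_spec (n : ℕ) (θ : Fin n → AddCircle (1:ℝ)) :
    torusProj n (liftTor n θ) = θ :=
  funext fun i => Classical.choose_spec (circle_surj (θ i))

lemma pbar_surj (θ : AddCircle (1:ℝ) × (Fin (d-1) → AddCircle (1:ℝ))) :
    ∃ w, pbar d w = θ := by
  refine ⟨(Classical.choose (circle_surj θ.1), liftTor (d-1) θ.2), ?_⟩
  exact Prod.ext (Classical.choose_spec (circle_surj θ.1)) (liftTor_spec (d-1) θ.2)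

lemma pbar_cont : Continuous (pbar d) :=
  (circle_coe_cont.comp continuous_fst).prodMk ((tp_cont (d-1)).comp continuous_snd)

lemma pbar_add (w : ℝ × EuclideanSpace ℝ (Fin (d-1))) (k : ℤ) (q : Fin (d-1) → ℤ) :
    pbar d (w + ((k:ℝ), toEuc (d-1) fun j => (q j : ℝ))) = pbar d w := by
  refine Prod.ext ?_ ?_
  · show (((w.1 + (k:ℝ)) : ℝ) : AddCircle (1:ℝ)) = _
    exact circle_coe_add_int w.1 k
  · show torusProj (d-1) (w.2 + toEuc (d-1) fun j => (q j : ℝ)) = _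
    exact tp_add_int (d-1) w.2 q

lemma pbar_eq {w w' : ℝ × EuclideanSpace ℝ (Fin (d-1))} (h : pbar d w = pbar d w') :
    ∃ (k : ℤ) (q : Fin (d-1) → ℤ),
      w' = w + ((k:ℝ), toEuc (d-1) fun j => (q j : ℝ)) := by
  obtain ⟨k, hk⟩ := circle_eq_iff (congrArg Prod.fst h)
  obtain ⟨q, hq⟩ := tp_eq_iff (congrArg Prod.snd h)
  exact ⟨k, q, Prod.ext hk hq⟩

def combineInt (d : ℕ) (k : ℤ) (q : Fin (d-1) → ℤ) : Fin d → ℤ :=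
  fun i => if h : i.val = 0 then k else q ⟨i.val - 1, by have := i.isLt; omega⟩

lemma combineInt_zero (hd : 0 < d) (k : ℤ) (q : Fin (d-1) → ℤ) :
    combineInt d k q ⟨0, hd⟩ = k := by simp [combineInt]

lemma projQ_combineInt (hd : 0 < d) (k : ℤ) (q : Fin (d-1) → ℤ) :
    projQ d 1 hd (toEuc d fun i => ((combineInt d k q i : ℤ) : ℝ))
      = toEuc (d-1) fun j => (q j : ℝ) := by
  ext j
  show ((combineInt d k q ⟨1 + j.val, _⟩ : ℤ) : ℝ) = (q j : ℝ)
  have h : (1 + j.val) ≠ 0 := by omega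
  simp only [combineInt, dif_neg h, Nat.add_sub_cancel_left, Fin.eta]

end Torus2

end Stmt15

open Stmt15

/--
Let `F̂(z) = Mz + G(z)` be a C¹ lift of a torus map with `G` of class
C¹, satisfying the expanding-block assumption with `k = 1` (so `P(z) = z₁`,
`P∘M = m·P` for an integer `m` with `|m| > 1`), and admitting an invariant expanding cone
structure with constants `α > 0` and `K > 1` centered on the first coordinate direction.
Let `Φ̂(z) = lim_{n→∞} m^{−n} P(F̂ⁿ(z))` and define `Ĥ : ℝ^d → ℝ × ℝ^{d−1} ≅ ℝ^d` by
`Ĥ(z) = (Φ̂(z), Qz)`. Then `Ĥ` is a homeomorphism of `ℝ^d`, it satisfies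
`Ĥ(z + p) = Ĥ(z) + (p₁, Qp)` for all `p ∈ ℤ^d`, and the conjugated map `Ĥ∘F̂∘Ĥ⁻¹` has
the skew-product form `(x, y) ↦ (m·x, g(x,y))` for some continuous `g`. Hence the induced
torus map is topologically conjugate to a skew product over the expanding circle map
`x ↦ mx mod 1`.
-/
theorem stmt15 (d : ℕ) (hd : 0 < d)
    (M : Matrix (Fin d) (Fin d) ℝ) (hMint : ∀ i j, ∃ n : ℤ, M i j = (n : ℝ))
    (G : EuclideanSpace ℝ (Fin d) → EuclideanSpace ℝ (Fin d))
    (hGC1 : ContDiff ℝ 1 G) (hGbdd : ∃ C, ∀ z, ‖G z‖ ≤ C)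
    (hGper : ∀ (z : EuclideanSpace ℝ (Fin d)) (p : Fin d → ℤ),
      G (z + toEuc d fun i => (p i : ℝ)) = G z)
    (F : EuclideanSpace ℝ (Fin d) → EuclideanSpace ℝ (Fin d))
    (hF : ∀ z, F z = toEuc d (M.mulVec z) + G z)
    (m : ℤ) (hm : 1 < |m|)
    (hPM : ∀ z : EuclideanSpace ℝ (Fin d),
      toEuc d (M.mulVec z) ⟨0, hd⟩ = (m : ℝ) * z ⟨0, hd⟩)
    (α K : ℝ) (hα : 0 < α) (hK : 1 < K)
    (hcone : ∀ (z v : EuclideanSpace ℝ (Fin d)),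
      ‖projQ d 1 hd v‖ ≤ α * |v ⟨0, hd⟩| →
        ‖projQ d 1 hd (fderiv ℝ F z v)‖ ≤ α * |(fderiv ℝ F z v) ⟨0, hd⟩| ∧
        K * |v ⟨0, hd⟩| ≤ |(fderiv ℝ F z v) ⟨0, hd⟩|)
    (Φ : EuclideanSpace ℝ (Fin d) → ℝ)
    (hΦ : ∀ z, Tendsto (fun n : ℕ => ((m : ℝ) ^ n)⁻¹ * (F^[n] z) ⟨0, hd⟩)
      atTop (𝓝 (Φ z)))
    :
    ∃ H : EuclideanSpace ℝ (Fin d) ≃ₜ (ℝ × EuclideanSpace ℝ (Fin (d - 1))),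
      (∀ z, H z = (Φ z, projQ d 1 hd z)) ∧
      (∀ (z : EuclideanSpace ℝ (Fin d)) (p : Fin d → ℤ),
        H (z + toEuc d fun i => (p i : ℝ))
          = H z + ((p ⟨0, hd⟩ : ℝ), projQ d 1 hd (toEuc d fun i => (p i : ℝ)))) ∧
      (∃ g : ℝ × EuclideanSpace ℝ (Fin (d - 1)) → EuclideanSpace ℝ (Fin (d - 1)),
        Continuous g ∧
        ∀ w : ℝ × EuclideanSpace ℝ (Fin (d - 1)),
          H (F (H.symm w)) = ((m : ℝ) * w.1, g w)) ∧
      -- hence the induced torus map is topologically conjugate to a skew product over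
      -- the expanding circle map `x ↦ mx mod 1`:
      ∃ (Fbar : (Fin d → AddCircle (1 : ℝ)) → (Fin d → AddCircle (1 : ℝ)))
        (Hbar : (Fin d → AddCircle (1 : ℝ)) ≃ₜ
          (AddCircle (1 : ℝ) × (Fin (d - 1) → AddCircle (1 : ℝ))))
        (gbar : AddCircle (1 : ℝ) × (Fin (d - 1) → AddCircle (1 : ℝ)) →
          (Fin (d - 1) → AddCircle (1 : ℝ))),
        (∀ z, Fbar (torusProj d z) = torusProj d (F z)) ∧
        (∀ z, Hbar (torusProj d z) = (((Φ z : ℝ) : AddCircle (1 : ℝ)),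
          torusProj (d - 1) (projQ d 1 hd z))) ∧
        (∀ θ, Hbar (Fbar (Hbar.symm θ)) = (m • θ.1, gbar θ)) := by

  haveI : Fact ((0:ℝ) < 1) := ⟨one_pos⟩
  obtain ⟨C, hGbdd'⟩ := hGbdd
  obtain ⟨H, hH⟩ := exists_H hd M hMint hGper hF hGC1 hPM hm hGbdd' hα hK hcone hΦ
  -- periodicity of H
  have hHper : ∀ (z : EuclideanSpace ℝ (Fin d)) (p : Fin d → ℤ),
      H (z + toEuc d fun i => (p i : ℝ))
        = H z + ((p ⟨0, hd⟩ : ℝ), projQ d 1 hd (toEuc d fun i => (p i : ℝ))) := by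
    intro z p
    rw [hH, hH]
    have hfst : Φ (z + toEuc d fun i => (p i : ℝ)) = Φ z + (p ⟨0, hd⟩ : ℝ) :=
      Phi_per hd M hMint hGper hF hPM hm hΦ z p
    have hsnd := projQ_add hd z (toEuc d fun i => (p i : ℝ))
    rw [Prod.mk_add_mk]
    exact Prod.ext hfst hsnd
  -- skew product form
  have hΦsymm : ∀ w, Φ (H.symm w) = w.1 := by
    intro w
    have h1 := H.apply_symm_apply w
    rw [hH (H.symm w)] at h1
    exact congrArg Prod.fst h1
  have hskew : ∀ w : ℝ × EuclideanSpace ℝ (Fin (d - 1)),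
      H (F (H.symm w)) = ((m : ℝ) * w.1, projQ d 1 hd (F (H.symm w))) := by
    intro w
    rw [hH]
    refine Prod.ext ?_ rfl
    show Φ (F (H.symm w)) = (m : ℝ) * w.1
    rw [Phi_F hd hm hΦ, hΦsymm]
  have hFcont : Continuous F := (F_contDiff M hF hGC1).continuous
  -- torus machinery
  have hwd1 : ∀ z z', torusProj d z = torusProj d z' →
      pbar d (H z) = pbar d (H z') := by
    intro z z' hzz
    obtain ⟨p, hp⟩ := tp_eq_iff hzz
    rw [hp, hHper z p]
    set q : Fin (d-1) → ℤ := fun j => p ⟨1 + j.val, by have := j.isLt; omega⟩ with hq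
    have hproj : projQ d 1 hd (toEuc d fun i => (p i : ℝ))
        = toEuc (d-1) fun j => (q j : ℝ) := rfl
    rw [hproj]
    exact (pbar_add (H z) (p ⟨0, hd⟩) q).symm
  set hfbar : (Fin d → AddCircle (1:ℝ)) →
      AddCircle (1:ℝ) × (Fin (d - 1) → AddCircle (1:ℝ)) :=
    fun θ => pbar d (H (liftTor d θ)) with hhfbar
  have hfbar_proj : ∀ z, hfbar (torusProj d z) = pbar d (H z) :=
    fun z => hwd1 _ z (liftTor_spec d _)
  have hwd2 : ∀ w w', pbar d w = pbar d w' →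
      torusProj d (H.symm w) = torusProj d (H.symm w') := by
    intro w w' hww
    obtain ⟨k, q, hw'⟩ := pbar_eq hww
    set p : Fin d → ℤ := combineInt d k q with hpdef
    have h1 : H (H.symm w + toEuc d fun i => (p i : ℝ)) = w' := by
      rw [hHper (H.symm w) p, H.apply_symm_apply, hw']
      congr 1
      refine Prod.ext ?_ ?_
      · show ((p ⟨0, hd⟩ : ℤ) : ℝ) = ((k : ℤ) : ℝ)
        rw [hpdef, combineInt_zero hd k q]
      · exact projQ_combineInt hd k q
    have h2 : H.symm w' = H.symm w + toEuc d fun i => (p i : ℝ) := by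
      rw [← h1, H.symm_apply_apply]
    rw [h2, tp_add_int]
  set hgbar : AddCircle (1:ℝ) × (Fin (d - 1) → AddCircle (1:ℝ)) →
      (Fin d → AddCircle (1:ℝ)) :=
    fun θ' => torusProj d (H.symm (Classical.choose (pbar_surj θ'))) with hhgbar
  have hgbar_pbar : ∀ w, hgbar (pbar d w) = torusProj d (H.symm w) :=
    fun w => hwd2 _ w (Classical.choose_spec (pbar_surj (pbar d w)))
  have hleft : Function.LeftInverse hgbar hfbar := by
    intro θ
    obtain ⟨z, hz⟩ := tp_surj d θ
    rw [← hz, hfbar_proj, hgbar_pbar, H.symm_apply_apply]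
  have hright : Function.RightInverse hgbar hfbar := by
    intro θ'
    obtain ⟨w, hw⟩ := pbar_surj θ'
    rw [← hw, hgbar_pbar, hfbar_proj, H.apply_symm_apply]
  set HbarE : (Fin d → AddCircle (1:ℝ)) ≃
      AddCircle (1:ℝ) × (Fin (d - 1) → AddCircle (1:ℝ)) :=
    ⟨hfbar, hgbar, hleft, hright⟩ with hHbarE
  have hfbar_cont : Continuous hfbar := by
    rw [(tp_isQuotientMap d).continuous_iff]
    have : (hfbar ∘ torusProj d) = (pbar d) ∘ (⇑H) := funext fun z => hfbar_proj z
    rw [this]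
    exact pbar_cont.comp H.continuous
  have hHbarE_cont : Continuous HbarE := hfbar_cont
  set Hbar := Continuous.homeoOfEquivCompactToT2 (f := HbarE) hHbarE_cont with hHbardef
  have hHbar_coe : ∀ θ, Hbar θ = hfbar θ := fun θ => rfl
  set Fbar : (Fin d → AddCircle (1:ℝ)) → (Fin d → AddCircle (1:ℝ)) :=
    fun θ => torusProj d (F (liftTor d θ)) with hFbardef
  have hFbar_proj : ∀ z, Fbar (torusProj d z) = torusProj d (F z) := by
    intro z
    have h := (liftTor_spec d (torusProj d z)).symm
    obtain ⟨p, hp⟩ := tp_eq_iff h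
    show torusProj d (F (liftTor d (torusProj d z))) = torusProj d (F z)
    rw [hp]
    obtain ⟨q', hq'⟩ := F_lattice_one M hMint hGper hF z p
    rw [hq', tp_add_int]
  refine ⟨H, hH, hHper, ⟨fun w => projQ d 1 hd (F (H.symm w)),
    (continuous_projQ hd).comp (hFcont.comp H.continuous_symm), hskew⟩, ?_⟩
  refine ⟨Fbar, Hbar, fun θ => (Hbar (Fbar (Hbar.symm θ))).2, hFbar_proj, ?_, ?_⟩
  · intro z
    rw [hHbar_coe, hfbar_proj z, hH z]
    rfl
  · intro θ
    obtain ⟨w, hw⟩ := pbar_surj θ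
    have h1 : Hbar (torusProj d (H.symm w)) = θ := by
      rw [hHbar_coe, hfbar_proj, H.apply_symm_apply, hw]
    have h2 : Hbar.symm θ = torusProj d (H.symm w) := by
      rw [← h1, Homeomorph.symm_apply_apply]
    refine Prod.ext ?_ rfl
    show (Hbar (Fbar (Hbar.symm θ))).1 = m • θ.1
    rw [h2, hFbar_proj, hHbar_coe, hfbar_proj, hskew w]
    show (((m : ℝ) * w.1 : ℝ) : AddCircle (1:ℝ)) = m • θ.1
    rw [circle_zsmul m w.1]
    congr 1
    rw [← hw]
    rfl
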